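/- Let G and T be k-uniform hypergraphs on the same n-vertex set, where T is the complete l-partite k-graph determined by a partition V₁ ∪ ⋯ ∪ V_l maximizing f = Σ_{D ∈ G} |{i ∈ [l] : D ∩ V_i ≠ ∅}| over all partitions into l parts. If G is c·C(n,k)-close to T^{(k)}(n,l) for some c > 0, then |G \ T| ≤ ck·C(n,k). -/

import Mathlib

open Finset

/-- A `k`-uniform hypergraph: every edge has `k` vertices. -/
def IsUniform (k : ℕ) {V : Type*} (G : Finset (Finset V)) : Prop :=
  ∀ e ∈ G, e.card = k

/-- The Turán-type hypergraph `T^{(k)}(n,l)`: partition `Fin n` into `l` almost equal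
parts (residues mod `l`) and take all `k`-sets meeting each part in at most one vertex. -/
def turan (n l k : ℕ) : Finset (Finset (Fin n)) :=
  ((Finset.univ : Finset (Fin n)).powersetCard k).filter
    (fun e => (e.image (fun v : Fin n => v.val % l)).card = e.card)

/-- The complete `l`-partite `k`-graph determined by parts `P`. -/
def multipartite {n : ℕ} (k : ℕ) {l : ℕ} (P : Fin l → Finset (Fin n)) :
    Finset (Finset (Fin n)) :=
  ((Finset.univ : Finset (Fin n)).powersetCard k).filter (fun e => ∀ i, (e ∩ P i).card ≤ 1)

/-- `G` contains a (not necessarily induced) copy of the pattern `H`. -/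
def Contains {α β : Type*} [DecidableEq α] [DecidableEq β]
    (H : Finset (Finset α)) (G : Finset (Finset β)) : Prop :=
  ∃ φ : α → β, Set.InjOn φ ↑(H.sup id) ∧ ∀ e ∈ H, e.image φ ∈ G

/-- The `k`-graph `H_l^{(k)}`: the complete graph on core `{0,…,l-1}`, each edge
enlarged by a fresh set of `k-2` vertices, all enlarging sets pairwise disjoint
and disjoint from the core. -/
def Hgraph (k l : ℕ) : Finset (Finset ℕ) :=
  ((((Finset.range l) ×ˢ (Finset.range l)).filter (fun p => p.1 < p.2))).image
    (fun p => insert p.1 (insert p.2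
      ((Finset.range (k - 2)).image (fun r => l + (p.1 * l + p.2) * (k - 2) + r))))

/-- The complete `k`-graph on `k+1` vertices, as a pattern on `ℕ`. -/
def Kpattern (k : ℕ) : Finset (Finset ℕ) := (Finset.range (k + 1)).powersetCard k

/-- The Turán number for a family of patterns `𝓕`: the maximum number of edges of a
`k`-uniform hypergraph on `n` vertices containing no member of `𝓕`. -/
noncomputable def exFam (k : ℕ) (F : Set (Finset (Finset ℕ))) (n : ℕ) : ℕ :=
  sSup {m | ∃ G : Finset (Finset (Fin n)), IsUniform k G ∧
    (∀ H ∈ F, ¬ Contains H G) ∧ G.card = m}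

/-- Two hypergraphs on `Fin n` are `m`-close: some relabelling of the vertices makes the
symmetric difference of the edge sets have at most `m` edges. -/
def Close {n : ℕ} (G H : Finset (Finset (Fin n))) (m : ℝ) : Prop :=
  ∃ σ : Fin n ≃ Fin n, (((symmDiff (G.image (fun e => e.image σ)) H)).card : ℝ) ≤ m

/-- A family `F` of patterns with Turán density `p` is `s`-stable. -/
def Stable (k s : ℕ) (F : Set (Finset (Finset ℕ))) (p : ℝ) : Prop :=
  ∀ ε : ℝ, 0 < ε → ∃ δ : ℝ, 0 < δ ∧ ∃ n₀ : ℕ, ∀ n ≥ n₀,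
    ∀ G : Fin (s + 1) → Finset (Finset (Fin n)),
      (∀ i, IsUniform k (G i) ∧ (∀ H ∈ F, ¬ Contains H (G i)) ∧
        (p - δ) * (n.choose k : ℝ) ≤ ((G i).card : ℝ)) →
      ∃ i j, i ≠ j ∧ Close (G i) (G j) (ε * (n.choose k : ℝ))

/-- The `t`-blowup of a pattern on `ℕ`: each vertex `v` is replaced by the `t` copies
`v*t, …, v*t+t-1`, and each edge by all choices of one copy of each of its vertices. -/
def blowupN (F : Finset (Finset ℕ)) (t : ℕ) : Finset (Finset ℕ) :=
  F.biUnion (fun e => (Finset.univ : Finset ({x // x ∈ e} → Fin t)).image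
    (fun f => e.attach.image (fun x : {y // y ∈ e} => x.1 * t + (f x).1)))



lemma cnt_eq_image {n l : ℕ} (g : Fin n → Fin l) (P : Fin l → Finset (Fin n))
    (hPg : ∀ v i, v ∈ P i ↔ g v = i) (D : Finset (Fin n))
    [DecidablePred fun i : Fin l => (D ∩ P i).Nonempty] :
    (Finset.univ.filter fun i : Fin l => (D ∩ P i).Nonempty) = D.image g := by
  ext i
  simp only [Finset.mem_filter, Finset.mem_univ, true_and, Finset.mem_image]
  constructor
  · rintro ⟨v, hv⟩
    rw [Finset.mem_inter] at hv
    exact ⟨v, hv.1, (hPg v i).1 hv.2⟩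
  · rintro ⟨v, hvD, hgv⟩
    exact ⟨v, Finset.mem_inter.2 ⟨hvD, (hPg v i).2 hgv⟩⟩

/-- if the partition `P` maximizes `f = Σ_{D ∈ G} #(parts met by D)` and `G`
is `c·C(n,k)`-close to `T^(k)(n,l)`, then `|G \\ T| ≤ ck·C(n,k)` where `T` is the complete
`l`-partite `k`-graph of `P`. -/
theorem stmt11 (n l k : ℕ) (hk : 1 ≤ k) (c : ℝ) (hc : 0 < c)
    (G : Finset (Finset (Fin n))) (hG : IsUniform k G)
    (P : Fin l → Finset (Fin n)) (hP : ∀ v : Fin n, ∃! i, v ∈ P i)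
    (hmax : ∀ Q : Fin l → Finset (Fin n), (∀ v : Fin n, ∃! i, v ∈ Q i) →
      (∑ D ∈ G, (Finset.univ.filter (fun i => (D ∩ Q i).Nonempty)).card) ≤
      (∑ D ∈ G, (Finset.univ.filter (fun i => (D ∩ P i).Nonempty)).card))
    (hclose : Close G (turan n l k) (c * (n.choose k : ℝ))) :
    ((G \ multipartite k P).card : ℝ) ≤ c * (k : ℝ) * (n.choose k : ℝ) := by
  classical
  rcases Nat.eq_zero_or_pos n with hn | hn
  · subst hn
    have hGe : G = ∅ := by
      rw [Finset.eq_empty_iff_forall_notMem]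
      intro e he
      have h1 := hG e he
      have h2 : e = ∅ := Finset.eq_empty_of_isEmpty e
      rw [h2] at h1
      simp at h1
      omega
    subst hGe
    simp
    positivity
  rcases Nat.eq_zero_or_pos l with hl | hl
  · subst hl
    obtain ⟨i, -, -⟩ := hP ⟨0, hn⟩
    exact i.elim0
  obtain ⟨σ, hσ⟩ := hclose
  set T := multipartite k P with hT
  -- the fiber function of P
  set g : Fin n → Fin l := fun v => Classical.choose (hP v) with hgdef
  have hg1 : ∀ v, v ∈ P (g v) := fun v => (Classical.choose_spec (hP v)).1
  have hPg : ∀ v i, v ∈ P i ↔ g v = i := by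
    intro v i
    constructor
    · intro h
      exact ((Classical.choose_spec (hP v)).2 i h).symm
    · rintro rfl
      exact hg1 v
  -- the fiber function of the Turán partition pulled back by σ
  set g' : Fin n → Fin l := fun v => ⟨(σ v).val % l, Nat.mod_lt _ hl⟩ with hg'def
  set Q : Fin l → Finset (Fin n) := fun i => Finset.univ.filter (fun v => g' v = i) with hQdef
  have hQg : ∀ v i, v ∈ Q i ↔ g' v = i := by
    intro v i
    simp [hQdef]
  have hQ : ∀ v : Fin n, ∃! i, v ∈ Q i := by
    intro v
    refine ⟨g' v, (hQg v _).2 rfl, fun y hy => ((hQg v y).1 hy).symm⟩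
  -- Step A/B : ∑ cntP + |G \ T| ≤ k * |G|
  have hGT : (G \ T).card = ∑ D ∈ G, (if D ∈ T then 0 else 1) := by
    rw [Finset.sdiff_eq_filter, Finset.card_filter]
    exact Finset.sum_congr rfl (fun D _ => by rw [ite_not])
  have stepB : (∑ D ∈ G, (Finset.univ.filter (fun i => (D ∩ P i).Nonempty)).card)
      + (G \ T).card ≤ k * G.card := by
    rw [hGT, ← Finset.sum_add_distrib]
    calc (∑ D ∈ G, ((Finset.univ.filter (fun i => (D ∩ P i).Nonempty)).card
            + (if D ∈ T then 0 else 1)))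
        ≤ ∑ D ∈ G, k := by
          apply Finset.sum_le_sum
          intro D hD
          rw [cnt_eq_image g P hPg D]
          have hDk : D.card = k := hG D hD
          by_cases hDT : D ∈ T
          · simp only [hDT, if_true, add_zero]
            exact le_trans (Finset.card_image_le) (le_of_eq hDk)
          · simp only [hDT, if_false]
            -- D violates multipartiteness: some part meets D in ≥ 2 vertices
            have hDp : D ∈ (Finset.univ : Finset (Fin n)).powersetCard k := by
              rw [Finset.mem_powersetCard_univ]; exact hDk
            have : ¬ ∀ i, (D ∩ P i).card ≤ 1 := by
              intro hall
              exact hDT (by rw [hT, multipartite, Finset.mem_filter]; exact ⟨hDp, hall⟩)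
            push_neg at this
            obtain ⟨i, hi⟩ := this
            obtain ⟨u, hu, v, hv, huv⟩ := Finset.one_lt_card.1 hi
            rw [Finset.mem_inter] at hu hv
            have hgu : g u = i := (hPg u i).1 hu.2
            have hgv : g v = i := (hPg v i).1 hv.2
            have himg : D.image g = (D.erase u).image g := by
              apply Finset.Subset.antisymm
              · intro x hx
                rw [Finset.mem_image] at hx ⊢
                obtain ⟨w, hw, rfl⟩ := hx
                by_cases hwu : w = u
                · exact ⟨v, Finset.mem_erase.2 ⟨huv.symm, hv.1⟩, by rw [hwu, hgu, hgv]⟩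
                · exact ⟨w, Finset.mem_erase.2 ⟨hwu, hw⟩, rfl⟩
              · exact Finset.image_subset_image (Finset.erase_subset _ _)
            have : (D.image g).card ≤ k - 1 := by
              rw [himg]
              calc ((D.erase u).image g).card ≤ (D.erase u).card := Finset.card_image_le
                _ = k - 1 := by rw [Finset.card_erase_of_mem hu.1, hDk]
            omega
      _ = k * G.card := by rw [Finset.sum_const, smul_eq_mul, mul_comm]
  -- Step C : k * |G| ≤ ∑ cntQ + k * |bad|
  set bad : Finset (Finset (Fin n)) := G.filter (fun D => ¬ D.image σ ∈ turan n l k)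
    with hbad
  set good : Finset (Finset (Fin n)) := G.filter (fun D => D.image σ ∈ turan n l k)
    with hgood
  have hsplit : good.card + bad.card = G.card :=
    Finset.card_filter_add_card_filter_not _
  have hgoodcnt : ∀ D ∈ good, (Finset.univ.filter (fun i => (D ∩ Q i).Nonempty)).card = k := by
    intro D hD
    rw [Finset.mem_filter] at hD
    obtain ⟨hDG, hDt⟩ := hD
    rw [cnt_eq_image g' Q hQg D]
    rw [turan, Finset.mem_filter] at hDt
    have hcardimg : ((D.image σ).image (fun v : Fin n => v.val % l)).card = (D.image σ).card :=
      hDt.2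
    have hval : (D.image g').image Fin.val = (D.image σ).image (fun v : Fin n => v.val % l) := by
      rw [Finset.image_image, Finset.image_image]
      rfl
    have h1 : (D.image g').card = ((D.image g').image Fin.val).card :=
      (Finset.card_image_of_injective _ Fin.val_injective).symm
    rw [h1, hval, hcardimg, Finset.card_image_of_injective _ σ.injective]
    exact hG D hDG
  have stepC : k * G.card ≤ (∑ D ∈ G, (Finset.univ.filter (fun i => (D ∩ Q i).Nonempty)).card)
      + k * bad.card := by
    have h1 : k * good.card ≤ ∑ D ∈ G, (Finset.univ.filter (fun i => (D ∩ Q i).Nonempty)).card := by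
      calc k * good.card = ∑ D ∈ good, k := by rw [Finset.sum_const, smul_eq_mul, mul_comm]
        _ = ∑ D ∈ good, (Finset.univ.filter (fun i => (D ∩ Q i).Nonempty)).card :=
          (Finset.sum_congr rfl hgoodcnt).symm
        _ ≤ _ := Finset.sum_le_sum_of_subset (Finset.filter_subset _ _)
    calc k * G.card = k * good.card + k * bad.card := by rw [← hsplit]; ring
      _ ≤ _ := by omega
  -- Step D : |bad| ≤ |symmDiff|
  have stepD : bad.card ≤ (symmDiff (G.image (fun e => e.image σ)) (turan n l k)).card := by
    apply Finset.card_le_card_of_injOn (fun D => D.image σ)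
    · intro D hD
      rw [Finset.mem_coe, Finset.mem_filter] at hD
      rw [Finset.mem_coe, Finset.mem_symmDiff]
      left
      exact ⟨Finset.mem_image_of_mem _ hD.1, hD.2⟩
    · intro a _ b _ hab
      exact Finset.image_injective σ.injective hab
  -- combine
  have hmaxQ := hmax Q hQ
  have hnat : (G \ T).card ≤ k * bad.card := by omega
  have hk0 : (0:ℝ) ≤ (k:ℝ) := Nat.cast_nonneg k
  calc ((G \ T).card : ℝ) ≤ ((k * bad.card : ℕ) : ℝ) := Nat.cast_le.2 hnat
    _ = (k:ℝ) * (bad.card : ℝ) := by push_cast; ring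
    _ ≤ (k:ℝ) * (c * (n.choose k : ℝ)) := by
        apply mul_le_mul_of_nonneg_left _ hk0
        calc (bad.card : ℝ) ≤ _ := Nat.cast_le.2 stepD
          _ ≤ c * (n.choose k : ℝ) := hσ
    _ = c * (k : ℝ) * (n.choose k : ℝ) := by ring
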